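/- Let S be a Noetherian ring with resolution data as above (R = S/I with finite S-free resolution E of length c and ∂_c ≅ ∂_1^*). The isomorphism M → Tor^S_c(R, M) induced by σ^M_{c,•} is functorial in M: for any R-module homomorphism φ: M → N, with chosen resolutions and chain maps, the square with horizontal maps Tor^S_i(R,φ) and vertical maps induced by σ^M and σ^N commutes. The functoriality follows because any two chain maps E ⊗ K → L lifting the same map R ⊗ M → N are homotopic, and the homotopy restricts (since R ⊗ ∂_c = 0) to a homotopy between the induced maps R ⊗ E_c ⊗ K → R ⊗ L. -/
import Mathlib


/-!
STATEMENT 13: In the setting of Theorem "sigma" (`S` Noetherian, `R = S/I` with a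
finite `S`-free resolution `E` of length `c+1` satisfying `∂_{c+1} ≅ ∂₁^*`), the
isomorphism `M → Tor^S_{c+1}(R, M)` induced by `σ^M_{c+1,•}` is functorial in `M`:
for any `R`-module map `φ : M → N`, lifted to `φ̂ : K → L` on `S`-free resolutions,
the square formed by `Tor(R, φ)` and the maps induced by `σ^M, σ^N` commutes
(on homology of `K/IK → L/IL`, stated elementwise).
-/

/-- transport along an equality of indices -/
def castK {S : Type*} [CommRing S] {K : ℕ → Type*}
    [∀ i, AddCommGroup (K i)] [∀ i, Module S (K i)] {a b : ℕ} (h : a = b) :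
    K a →ₗ[S] K b := by subst h; exact LinearMap.id

/-- reduction of a linear map modulo `I` -/
def quotMap {S : Type*} [CommRing S] (I : Ideal S) {A B : Type*}
    [AddCommGroup A] [Module S A] [AddCommGroup B] [Module S B] (φ : A →ₗ[S] B) :
    (A ⧸ (I • (⊤ : Submodule S A))) →ₗ[S] (B ⧸ (I • (⊤ : Submodule S B))) :=
  Submodule.mapQ _ _ φ (by
    refine Submodule.smul_le.mpr fun r hr m _ => ?_
    simp only [Submodule.mem_comap, map_smul]
    exact Submodule.smul_mem_smul hr Submodule.mem_top)

section Aux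
variable {S : Type*} [CommRing S]

lemma lift_helper {A B P : Type*} [AddCommGroup A] [Module S A] [AddCommGroup B] [Module S B]
    [AddCommGroup P] [Module S P] [Module.Projective S P]
    (f : A →ₗ[S] B) (g : P →ₗ[S] B) (hg : LinearMap.range g ≤ LinearMap.range f) :
    ∃ h : P →ₗ[S] A, f ∘ₗ h = g := by
  obtain ⟨h, hh⟩ := Module.projective_lifting_property f.rangeRestrict
    (g.codRestrict (LinearMap.range f) (fun x => hg ⟨x, rfl⟩)) f.surjective_rangeRestrict
  exact ⟨h, by ext p; exact congrArg Subtype.val (LinearMap.congr_fun hh p)⟩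

lemma smulTop_map (I : Ideal S) {A B : Type*} [AddCommGroup A] [Module S A]
    [AddCommGroup B] [Module S B] (f : A →ₗ[S] B) {v : A}
    (hv : v ∈ I • (⊤ : Submodule S A)) : f v ∈ I • (⊤ : Submodule S B) :=
  Submodule.smul_induction_on hv
    (fun r hr m _ => by rw [map_smul]; exact Submodule.smul_mem_smul hr Submodule.mem_top)
    (fun x y hx hy => by rw [map_add]; exact Submodule.add_mem _ hx hy)

variable {K L : ℕ → Type*} [∀ i, AddCommGroup (K i)] [∀ i, Module S (K i)]
  [∀ i, AddCommGroup (L i)] [∀ i, Module S (L i)]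

lemma castK_apply_natural (f : ∀ i, K i →ₗ[S] L i) {a b : ℕ} (h : a = b) (v : K a) :
    f b (castK (S := S) (K := K) h v) = castK (S := S) (K := L) h (f a v) := by subst h; rfl

lemma castK_d_apply (d : ∀ i, L (i+1) →ₗ[S] L i) {a b : ℕ} (h : a = b)
    (h2 : a + 1 = b + 1) (v : L (a+1)) : d b (castK (S := S) (K := L) h2 v) = castK (S := S) (K := L) h (d a v) := by
  subst h; rfl

lemma castK_rfl_apply {a : ℕ} (h : a = a) (v : K a) : castK (S := S) (K := K) h v = v := rfl

end Aux

open TensorProduct in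
noncomputable def auxC {S : Type*} [CommRing S] {E K L : ℕ → Type*}
    [∀ i, AddCommGroup (E i)] [∀ i, Module S (E i)]
    [∀ i, AddCommGroup (K i)] [∀ i, Module S (K i)]
    [∀ i, AddCommGroup (L i)] [∀ i, Module S (L i)]
    (dE : ∀ i, E (i+1) →ₗ[S] E i) (dK : ∀ i, K (i+1) →ₗ[S] K i)
    (H : ∀ i j, (E i ⊗[S] K j) →ₗ[S] L (i+j+1)) : ∀ i j, (E i ⊗[S] K j) →ₗ[S] L (i+j)
  | 0, 0 => 0
  | 0, j+1 => H 0 j ∘ₗ TensorProduct.map LinearMap.id (dK j)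
  | i+1, 0 => H i 0 ∘ₗ TensorProduct.map (dE i) LinearMap.id
  | i+1, j+1 =>
      (castK (by omega) : L (i+(j+1)+1) →ₗ[S] L ((i+1)+(j+1))) ∘ₗ
          (H i (j+1) ∘ₗ TensorProduct.map (dE i) LinearMap.id)
        + ((-1 : ℤ)^(i+1)) • ((H (i+1) j ∘ₗ TensorProduct.map LinearMap.id (dK j) :
            (E (i+1) ⊗[S] K (j+1)) →ₗ[S] L ((i+1)+(j+1))))


lemma quotMap_mk {S : Type*} [CommRing S] (I : Ideal S) {A B : Type*}
    [AddCommGroup A] [Module S A] [AddCommGroup B] [Module S B] (φ : A →ₗ[S] B) (v : A) :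
    quotMap I φ (Submodule.Quotient.mk v) = Submodule.Quotient.mk (φ v) := by
  simp [quotMap, Submodule.mapQ_apply]

set_option maxHeartbeats 1000000 in
open TensorProduct in
theorem sigma_top_iso_is_functorial
    (S : Type*) [CommRing S] [IsNoetherianRing S] (I : Ideal S) (c : ℕ)
    -- the resolution `E` of `R = S/I`, of length `c+1`, with `∂_{c+1} ≅ ∂₁^*`
    (E : ℕ → Type*) [∀ i, AddCommGroup (E i)] [∀ i, Module S (E i)]
    [∀ i, Module.Free S (E i)] [∀ i, Module.Finite S (E i)]
    (dE : ∀ i : ℕ, E (i + 1) →ₗ[S] E i)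
    (hvanish : ∀ i, Subsingleton (E (c + 2 + i)))
    (e₀ : E 0 ≃ₗ[S] S)
    (haug : LinearMap.range (e₀.toLinearMap ∘ₗ dE 0) = I)
    (hEexact : ∀ i, LinearMap.ker (dE i) = LinearMap.range (dE (i + 1)))
    (a : E (c + 1) ≃ₗ[S] Module.Dual S (E 0))
    (b : E c ≃ₗ[S] Module.Dual S (E 1))
    (hdual : ∀ z : E (c + 1), b (dE c z) = (dE 0).dualMap (a z))
    (u : E (c + 1) ≃ₗ[S] S)
    -- the `R`-modules `M`, `N`, their `S`-free resolutions `K`, `L`, and a map `φ`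
    (M : Type*) [AddCommGroup M] [Module S M] (hkillM : ∀ x ∈ I, ∀ m : M, x • m = 0)
    (N : Type*) [AddCommGroup N] [Module S N] (hkillN : ∀ x ∈ I, ∀ m : N, x • m = 0)
    (φ : M →ₗ[S] N)
    (K : ℕ → Type*) [∀ i, AddCommGroup (K i)] [∀ i, Module S (K i)]
    [∀ i, Module.Free S (K i)] [∀ i, Module.Finite S (K i)]
    (dK : ∀ i : ℕ, K (i + 1) →ₗ[S] K i)
    (εK : K 0 →ₗ[S] M) (hεK : Function.Surjective εK)
    (hK0 : LinearMap.ker εK = LinearMap.range (dK 0))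
    (hKexact : ∀ i, LinearMap.ker (dK i) = LinearMap.range (dK (i + 1)))
    (L : ℕ → Type*) [∀ i, AddCommGroup (L i)] [∀ i, Module S (L i)]
    [∀ i, Module.Free S (L i)] [∀ i, Module.Finite S (L i)]
    (dL : ∀ i : ℕ, L (i + 1) →ₗ[S] L i)
    (εL : L 0 →ₗ[S] N) (hεL : Function.Surjective εL)
    (hL0 : LinearMap.ker εL = LinearMap.range (dL 0))
    (hLexact : ∀ i, LinearMap.ker (dL i) = LinearMap.range (dL (i + 1)))
    -- `φ̂ : K → L` lifts `φ`
    (φhat : ∀ j : ℕ, K j →ₗ[S] L j)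
    (hφhat : ∀ j, (φhat j) ∘ₗ (dK j) = (dL j) ∘ₗ (φhat (j + 1)))
    (hφaug : εL ∘ₗ (φhat 0) = φ ∘ₗ εK)
    -- the chain maps `σ^M : E ⊗ K → K` and `σ^N : E ⊗ L → L`
    (σM : ∀ i j : ℕ, (E i ⊗[S] K j) →ₗ[S] K (i + j))
    (hσMaug : ∀ (y : E 0) (x : K 0), εK (σM 0 0 (y ⊗ₜ x)) = (e₀ y) • (εK x))
    (hσMchain : ∀ i j,
      (dK ((i + 1) + j)) ∘ₗ (σM (i + 1) (j + 1))
        = (castK (by omega) : K (i + (j + 1)) →ₗ[S] K ((i + 1) + j)) ∘ₗ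
            ((σM i (j + 1)) ∘ₗ (TensorProduct.map (dE i) LinearMap.id))
          + ((-1 : ℤ) ^ (i + 1)) •
            ((σM (i + 1) j) ∘ₗ (TensorProduct.map LinearMap.id (dK j))))
    (hσMchain0 : ∀ i,
      (dK i) ∘ₗ (σM (i + 1) 0) = (σM i 0) ∘ₗ (TensorProduct.map (dE i) LinearMap.id))
    (hσMchain0' : ∀ j,
      (dK (0 + j)) ∘ₗ (σM 0 (j + 1))
        = (σM 0 j) ∘ₗ (TensorProduct.map LinearMap.id (dK j)))
    (σN : ∀ i j : ℕ, (E i ⊗[S] L j) →ₗ[S] L (i + j))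
    (hσNaug : ∀ (y : E 0) (x : L 0), εL (σN 0 0 (y ⊗ₜ x)) = (e₀ y) • (εL x))
    (hσNchain : ∀ i j,
      (dL ((i + 1) + j)) ∘ₗ (σN (i + 1) (j + 1))
        = (castK (by omega) : L (i + (j + 1)) →ₗ[S] L ((i + 1) + j)) ∘ₗ
            ((σN i (j + 1)) ∘ₗ (TensorProduct.map (dE i) LinearMap.id))
          + ((-1 : ℤ) ^ (i + 1)) •
            ((σN (i + 1) j) ∘ₗ (TensorProduct.map LinearMap.id (dL j))))
    (hσNchain0 : ∀ i,
      (dL i) ∘ₗ (σN (i + 1) 0) = (σN i 0) ∘ₗ (TensorProduct.map (dE i) LinearMap.id))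
    (hσNchain0' : ∀ j,
      (dL (0 + j)) ∘ₗ (σN 0 (j + 1))
        = (σN 0 j) ∘ₗ (TensorProduct.map LinearMap.id (dL j)))
    -- the maps `σ^M_{c+1,•}`, `σ^N_{c+1,•}` via `u : E_{c+1} ≅ S`
    (sigM : ∀ j : ℕ, K j →ₗ[S] K (c + 1 + j))
    (hsigM : ∀ (j : ℕ) (x : K j), sigM j x = σM (c + 1) j ((u.symm 1) ⊗ₜ x))
    (sigN : ∀ j : ℕ, L j →ₗ[S] L (c + 1 + j))
    (hsigN : ∀ (j : ℕ) (x : L j), sigN j x = σN (c + 1) j ((u.symm 1) ⊗ₜ x)) :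
    -- the squares `Tor_i(R,φ)`/`Tor_{i+c+1}(R,φ)` against `σ^M_*, σ^N_*` commute:
    -- on `H₀`
    (∀ x : K 0 ⧸ (I • (⊤ : Submodule S (K 0))),
      (quotMap I (sigN 0)) ((quotMap I (φhat 0)) x)
          - (quotMap I (φhat (c + 1 + 0))) ((quotMap I (sigM 0)) x)
        ∈ LinearMap.range (quotMap I (dL (c + 1)))) ∧
    -- and on every `H_{i+1}`
    (∀ (i : ℕ) (x : K (i + 1) ⧸ (I • (⊤ : Submodule S (K (i + 1))))),
      (quotMap I (dK i)) x = 0 →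
      (quotMap I (sigN (i + 1))) ((quotMap I (φhat (i + 1))) x)
          - (quotMap I (φhat (c + 1 + (i + 1)))) ((quotMap I (sigM (i + 1))) x)
        ∈ LinearMap.range (quotMap I (dL (c + 1 + (i + 1))))) := by
    classical
  -- pointwise form of φ̂ being a chain map
  have hφ : ∀ (j : ℕ) (x : K (j+1)), φhat j (dK j x) = dL j (φhat (j+1) x) := by
    intro j x
    have := LinearMap.congr_fun (hφhat j) x
    simpa using this
  -- differentials compose to zero
  have hdEdE : ∀ (i : ℕ) (y : E (i+2)), dE i (dE (i+1) y) = 0 := by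
    intro i y
    have : dE (i+1) y ∈ LinearMap.ker (dE i) := by
      rw [hEexact i]; exact ⟨y, rfl⟩
    exact this
  have hdKdK : ∀ (j : ℕ) (x : K (j+2)), dK j (dK (j+1) x) = 0 := by
    intro j x
    have : dK (j+1) x ∈ LinearMap.ker (dK j) := by
      rw [hKexact j]; exact ⟨x, rfl⟩
    exact this
  -- pointwise chain identities for Σ = σN ∘ (id ⊗ φ̂)
  have hS0 : ∀ (y : E 0) (x : K 0),
      εL (σN 0 0 (y ⊗ₜ φhat 0 x)) = εL (φhat 0 (σM 0 0 (y ⊗ₜ x))) := by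
    intro y x
    have h1 := hσNaug y (φhat 0 x)
    have h2 := LinearMap.congr_fun hφaug (σM 0 0 (y ⊗ₜ x))
    have h3 := LinearMap.congr_fun hφaug x
    simp only [LinearMap.comp_apply] at h2 h3
    rw [h1, h2, hσMaug y x, map_smul, h3]
  have hSa : ∀ (i : ℕ) (y : E (i+1)) (x : K 0),
      dL i (σN (i+1) 0 (y ⊗ₜ φhat 0 x)) = σN i 0 (dE i y ⊗ₜ φhat 0 x) := by
    intro i y x
    have := LinearMap.congr_fun (hσNchain0 i) (y ⊗ₜ φhat 0 x)
    simpa using this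
  have hPa : ∀ (i : ℕ) (y : E (i+1)) (x : K 0),
      dL i (φhat (i+1) (σM (i+1) 0 (y ⊗ₜ x))) = φhat i (σM i 0 (dE i y ⊗ₜ x)) := by
    intro i y x
    refine ((hφ i (σM (i+1) 0 (y ⊗ₜ x))).symm).trans ?_
    have := LinearMap.congr_fun (hσMchain0 i) (y ⊗ₜ x)
    exact congrArg (φhat i) this
  have hSb : ∀ (j : ℕ) (y : E 0) (x : K (j+1)),
      dL (0+j) (σN 0 (j+1) (y ⊗ₜ φhat (j+1) x)) = σN 0 j (y ⊗ₜ φhat j (dK j x)) := by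
    intro j y x
    have := LinearMap.congr_fun (hσNchain0' j) (y ⊗ₜ φhat (j+1) x)
    simpa [hφ] using this
  have hPb : ∀ (j : ℕ) (y : E 0) (x : K (j+1)),
      dL (0+j) (φhat (0+(j+1)) (σM 0 (j+1) (y ⊗ₜ x)))
        = φhat (0+j) (σM 0 j (y ⊗ₜ dK j x)) := by
    intro j y x
    refine ((hφ (0+j) (σM 0 (j+1) (y ⊗ₜ x))).symm).trans ?_
    have := LinearMap.congr_fun (hσMchain0' j) (y ⊗ₜ x)
    exact congrArg (φhat (0+j)) this
  have hSc : ∀ (i j : ℕ) (y : E (i+1)) (x : K (j+1)),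
      dL ((i+1)+j) (σN (i+1) (j+1) (y ⊗ₜ φhat (j+1) x))
        = castK (S := S) (K := L) (by omega : i+(j+1) = (i+1)+j)
            (σN i (j+1) (dE i y ⊗ₜ φhat (j+1) x))
          + ((-1 : ℤ)^(i+1)) • σN (i+1) j (y ⊗ₜ φhat j (dK j x)) := by
    intro i j y x
    have := LinearMap.congr_fun (hσNchain i j) (y ⊗ₜ φhat (j+1) x)
    simp only [LinearMap.comp_apply, LinearMap.add_apply, LinearMap.smul_apply,
      TensorProduct.map_tmul, LinearMap.id_coe, id_eq] at this
    rw [hφ j x]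
    exact this
  have hPc : ∀ (i j : ℕ) (y : E (i+1)) (x : K (j+1)),
      dL ((i+1)+j) (φhat ((i+1)+(j+1)) (σM (i+1) (j+1) (y ⊗ₜ x)))
        = castK (S := S) (K := L) (by omega : i+(j+1) = (i+1)+j)
            (φhat (i+(j+1)) (σM i (j+1) (dE i y ⊗ₜ x)))
          + ((-1 : ℤ)^(i+1)) • φhat ((i+1)+j) (σM (i+1) j (y ⊗ₜ dK j x)) := by
    intro i j y x
    refine ((hφ ((i+1)+j) (σM (i+1) (j+1) (y ⊗ₜ x))).symm).trans ?_
    have h2 := LinearMap.congr_fun (hσMchain i j) (y ⊗ₜ x)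
    refine (congrArg (φhat ((i+1)+j)) h2).trans ?_
    simp only [LinearMap.comp_apply, LinearMap.add_apply, LinearMap.smul_apply,
      TensorProduct.map_tmul, LinearMap.id_coe, id_eq, map_add, map_zsmul]
    rw [castK_apply_natural (S := S) (K := K) (L := L) φhat]
  -- the homotopy, constructed by induction on the total degree
  have key : ∀ n : ℕ, ∃ H : ∀ i j : ℕ, (E i ⊗[S] K j) →ₗ[S] L (i+j+1),
      ∀ i j : ℕ, i + j ≤ n →
        dL (i+j) ∘ₗ H i j
          = σN i j ∘ₗ TensorProduct.map LinearMap.id (φhat j)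
            - φhat (i+j) ∘ₗ σM i j
            - auxC dE dK H i j := by
    intro n
    induction n with
    | zero =>
      have hz : εL ∘ₗ (σN 0 0 ∘ₗ TensorProduct.map LinearMap.id (φhat 0)
          - φhat (0+0) ∘ₗ σM 0 0) = 0 := by
        apply TensorProduct.ext'
        intro y x
        simp only [LinearMap.comp_apply, LinearMap.sub_apply, TensorProduct.map_tmul,
          LinearMap.id_coe, id_eq, LinearMap.zero_apply, map_sub]
        rw [hS0 y x]
        exact sub_self _
      obtain ⟨h00, hh00⟩ := lift_helper (dL 0)
        (σN 0 0 ∘ₗ TensorProduct.map LinearMap.id (φhat 0) - φhat (0+0) ∘ₗ σM 0 0)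
        (by
          rintro z ⟨w, rfl⟩
          rw [← hL0]
          exact LinearMap.mem_ker.mpr (LinearMap.congr_fun hz w))
      refine ⟨fun i j => match i, j with
        | 0, 0 => h00
        | _+1, _ => 0
        | 0, _+1 => 0, ?_⟩
      intro i j hij
      obtain ⟨rfl, rfl⟩ : i = 0 ∧ j = 0 := ⟨by omega, by omega⟩
      show dL (0+0) ∘ₗ h00
        = σN 0 0 ∘ₗ TensorProduct.map LinearMap.id (φhat 0) - φhat (0+0) ∘ₗ σM 0 0 - 0
      rw [sub_zero]
      exact hh00
    | succ n IH =>
      obtain ⟨H, hH⟩ := IH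
      have hHpt : ∀ i j, i + j ≤ n → ∀ (y : E i) (x : K j),
          dL (i+j) (H i j (y ⊗ₜ x))
            = σN i j (y ⊗ₜ φhat j x) - φhat (i+j) (σM i j (y ⊗ₜ x))
              - auxC dE dK H i j (y ⊗ₜ x) := by
        intro i j hij y x
        have := LinearMap.congr_fun (hH i j hij) (y ⊗ₜ x)
        simpa only [LinearMap.comp_apply, LinearMap.sub_apply, TensorProduct.map_tmul,
          LinearMap.id_coe, id_eq] using this
      have hex : ∀ i j, i + j = n + 1 →
          ∃ h : (E i ⊗[S] K j) →ₗ[S] L (i+j+1),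
            dL (i+j) ∘ₗ h
              = σN i j ∘ₗ TensorProduct.map LinearMap.id (φhat j)
                - φhat (i+j) ∘ₗ σM i j - auxC dE dK H i j := by
        intro i j hij
        rcases i with _ | i
        · rcases j with _ | j
          · omega
          · -- case (0, j+1)
            have hzero : dL (0+j) ∘ₗ
                (σN 0 (j+1) ∘ₗ TensorProduct.map LinearMap.id (φhat (j+1))
                  - φhat (0+(j+1)) ∘ₗ σM 0 (j+1)
                  - auxC dE dK H 0 (j+1)) = 0 := by
              apply TensorProduct.ext'
              intro y x
              have eBt : auxC dE dK H 0 (j+1) (y ⊗ₜ[S] x) = H 0 j (y ⊗ₜ dK j x) := rfl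
              show dL (0+j) (σN 0 (j+1) (y ⊗ₜ[S] φhat (j+1) x)
                  - φhat (0+(j+1)) (σM 0 (j+1) (y ⊗ₜ[S] x))
                  - auxC dE dK H 0 (j+1) (y ⊗ₜ[S] x)) = 0
              rw [map_sub, map_sub, eBt, hSb j y x, hPb j y x,
                hHpt 0 j (by omega) y (dK j x)]
              have hC0 : auxC dE dK H 0 j (y ⊗ₜ[S] dK j x) = 0 := by
                rcases j with _ | j'
                · rfl
                · have e1 : auxC dE dK H 0 (j'+1) (y ⊗ₜ[S] dK (j'+1) x)
                      = H 0 j' (y ⊗ₜ dK j' (dK (j'+1) x)) := rfl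
                  rw [e1, hdKdK j' x, TensorProduct.tmul_zero, map_zero]
              rw [hC0, sub_zero]
              exact sub_self _
            refine lift_helper (dL (0+(j+1))) _ ?_
            rintro z ⟨w, rfl⟩
            have hmem : _ ∈ LinearMap.ker (dL (0+j)) :=
              LinearMap.mem_ker.mpr (LinearMap.congr_fun hzero w)
            rw [hLexact (0+j)] at hmem
            exact hmem
        · rcases j with _ | j
          · -- case (i+1, 0)
            have hzero : dL i ∘ₗ
                (σN (i+1) 0 ∘ₗ TensorProduct.map LinearMap.id (φhat 0)
                  - φhat ((i+1)+0) ∘ₗ σM (i+1) 0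
                  - auxC dE dK H (i+1) 0) = 0 := by
              apply TensorProduct.ext'
              intro y x
              have eAt : auxC dE dK H (i+1) 0 (y ⊗ₜ[S] x) = H i 0 (dE i y ⊗ₜ x) := rfl
              have hh : dL i (H i 0 (dE i y ⊗ₜ[S] x))
                  = σN i 0 (dE i y ⊗ₜ[S] φhat 0 x)
                    - φhat (i+0) (σM i 0 (dE i y ⊗ₜ[S] x))
                    - auxC dE dK H i 0 (dE i y ⊗ₜ[S] x) :=
                hHpt i 0 (by omega) (dE i y) x
              have hsa : dL i (σN (i+1) 0 (y ⊗ₜ[S] φhat 0 x))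
                  = σN i 0 (dE i y ⊗ₜ[S] φhat 0 x) := hSa i y x
              have hpa : dL i (φhat ((i+1)+0) (σM (i+1) 0 (y ⊗ₜ[S] x)))
                  = φhat (i+0) (σM i 0 (dE i y ⊗ₜ[S] x)) := hPa i y x
              show dL i (σN (i+1) 0 (y ⊗ₜ[S] φhat 0 x)
                  - φhat ((i+1)+0) (σM (i+1) 0 (y ⊗ₜ[S] x))
                  - auxC dE dK H (i+1) 0 (y ⊗ₜ[S] x)) = 0
              rw [map_sub, map_sub, eAt, hsa, hpa, hh]
              have hC0 : auxC dE dK H i 0 (dE i y ⊗ₜ[S] x) = 0 := by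
                rcases i with _ | i'
                · rfl
                · have e1 : auxC dE dK H (i'+1) 0 (dE (i'+1) y ⊗ₜ[S] x)
                      = H i' 0 (dE i' (dE (i'+1) y) ⊗ₜ x) := rfl
                  rw [e1, hdEdE i' y, TensorProduct.zero_tmul, map_zero]
              rw [hC0, sub_zero]
              exact sub_self _
            refine lift_helper (dL ((i+1)+0)) _ ?_
            rintro z ⟨w, rfl⟩
            have hmem : _ ∈ LinearMap.ker (dL i) :=
              LinearMap.mem_ker.mpr (LinearMap.congr_fun hzero w)
            rw [hLexact i] at hmem
            exact hmem
          · -- case (i+1, j+1)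
            have hcc : i + (j+1) = (i+1) + j := by omega
            have pc : (i + (j+1)) + 1 = ((i+1) + j) + 1 := by omega
            have hzero : dL ((i+1)+j) ∘ₗ
                (σN (i+1) (j+1) ∘ₗ TensorProduct.map LinearMap.id (φhat (j+1))
                  - φhat ((i+1)+(j+1)) ∘ₗ σM (i+1) (j+1)
                  - auxC dE dK H (i+1) (j+1)) = 0 := by
              apply TensorProduct.ext'
              intro y x
              have eCt : auxC dE dK H (i+1) (j+1) (y ⊗ₜ[S] x)
                  = castK (S := S) (K := L) pc (H i (j+1) (dE i y ⊗ₜ x))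
                    + ((-1 : ℤ)^(i+1)) • H (i+1) j (y ⊗ₜ dK j x) := rfl
              have hh2 : dL ((i+1)+j) (H (i+1) j (y ⊗ₜ[S] dK j x))
                  = σN (i+1) j (y ⊗ₜ[S] φhat j (dK j x))
                    - φhat ((i+1)+j) (σM (i+1) j (y ⊗ₜ[S] dK j x))
                    - auxC dE dK H (i+1) j (y ⊗ₜ[S] dK j x) :=
                hHpt (i+1) j (by omega) y (dK j x)
              show dL ((i+1)+j) (σN (i+1) (j+1) (y ⊗ₜ[S] φhat (j+1) x)
                  - φhat ((i+1)+(j+1)) (σM (i+1) (j+1) (y ⊗ₜ[S] x))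
                  - auxC dE dK H (i+1) (j+1) (y ⊗ₜ[S] x)) = 0
              rw [map_sub, map_sub, eCt, map_add, map_zsmul,
                castK_d_apply (S := S) (L := L) dL hcc pc (H i (j+1) (dE i y ⊗ₜ x)),
                hSc i j y x, hPc i j y x,
                hHpt i (j+1) (by omega) (dE i y) x, hh2]
              have hC0 : castK (S := S) (K := L) hcc (auxC dE dK H i (j+1) (dE i y ⊗ₜ[S] x))
                  + ((-1 : ℤ)^(i+1)) • auxC dE dK H (i+1) j (y ⊗ₜ[S] dK j x) = 0 := by
                rcases i with _ | i' <;> rcases j with _ | j'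
                · -- (0,0)
                  have e1 : auxC dE dK H 0 (0+1) (dE 0 y ⊗ₜ[S] x)
                      = H 0 0 (dE 0 y ⊗ₜ dK 0 x) := rfl
                  have e2 : auxC dE dK H (0+1) 0 (y ⊗ₜ[S] dK 0 x)
                      = H 0 0 (dE 0 y ⊗ₜ dK 0 x) := rfl
                  rw [e1, e2, castK_rfl_apply (S := S) (K := L)]
                  simp [pow_one]
                · -- (0, j'+1)
                  have e1 : auxC dE dK H 0 (j'+1+1) (dE 0 y ⊗ₜ[S] x)
                      = H 0 (j'+1) (dE 0 y ⊗ₜ dK (j'+1) x) := rfl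
                  have q : (0 + (j'+1)) + 1 = ((0+1) + j') + 1 := by omega
                  have e2 : auxC dE dK H (0+1) (j'+1) (y ⊗ₜ[S] dK (j'+1) x)
                      = castK (S := S) (K := L) q (H 0 (j'+1) (dE 0 y ⊗ₜ dK (j'+1) x))
                        + ((-1 : ℤ)^(0+1)) •
                            H (0+1) j' (y ⊗ₜ dK j' (dK (j'+1) x)) := rfl
                  have ecast : ∀ v : L (0 + (j'+1) + 1),
                      castK (S := S) (K := L) hcc v = castK (S := S) (K := L) q v :=
                    fun v => rfl
                  rw [e1]
                  rw [e2]
                  rw [hdKdK j' x]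
                  simp only [TensorProduct.tmul_zero, map_zero, smul_zero, add_zero]
                  rw [ecast]
                  simp [pow_succ]
                · -- (i'+1, 0)
                  have q : (i' + (0+1)) + 1 = ((i'+1) + 0) + 1 := by omega
                  have e1 : auxC dE dK H (i'+1) (0+1) (dE (i'+1) y ⊗ₜ[S] x)
                      = castK (S := S) (K := L) q
                          (H i' (0+1) (dE i' (dE (i'+1) y) ⊗ₜ x))
                        + ((-1 : ℤ)^(i'+1)) •
                            H (i'+1) 0 (dE (i'+1) y ⊗ₜ dK 0 x) := rfl
                  have e2 : auxC dE dK H (i'+1+1) 0 (y ⊗ₜ[S] dK 0 x)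
                      = H (i'+1) 0 (dE (i'+1) y ⊗ₜ dK 0 x) := rfl
                  have ecast : ∀ v : L ((i'+1) + (0+1)),
                      castK (S := S) (K := L) hcc v = v := fun v => rfl
                  rw [e1]
                  rw [e2]
                  rw [hdEdE i' y]
                  simp only [TensorProduct.zero_tmul, map_zero, zero_add]
                  rw [map_zsmul]
                  rw [ecast]
                  simp [pow_succ]
                · -- (i'+1, j'+1)
                  have q1 : (i' + (j'+1+1)) + 1 = ((i'+1) + (j'+1)) + 1 := by omega
                  have p2 : ((i'+1) + (j'+1)) + 1 = ((i'+1+1) + j') + 1 := by omega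
                  have e1 : auxC dE dK H (i'+1) (j'+1+1) (dE (i'+1) y ⊗ₜ[S] x)
                      = castK (S := S) (K := L) q1
                          (H i' (j'+1+1) (dE i' (dE (i'+1) y) ⊗ₜ x))
                        + ((-1 : ℤ)^(i'+1)) •
                            H (i'+1) (j'+1) (dE (i'+1) y ⊗ₜ dK (j'+1) x) := rfl
                  have e2 : auxC dE dK H (i'+1+1) (j'+1) (y ⊗ₜ[S] dK (j'+1) x)
                      = castK (S := S) (K := L) p2
                          (H (i'+1) (j'+1) (dE (i'+1) y ⊗ₜ dK (j'+1) x))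
                        + ((-1 : ℤ)^(i'+1+1)) •
                            H (i'+1+1) j' (y ⊗ₜ dK j' (dK (j'+1) x)) := rfl
                  have ecast : ∀ v : L ((i'+1) + (j'+1) + 1),
                      castK (S := S) (K := L) hcc v = castK (S := S) (K := L) p2 v :=
                    fun v => rfl
                  rw [e1]
                  rw [e2]
                  rw [hdEdE i' y]
                  rw [hdKdK j' x]
                  simp only [TensorProduct.zero_tmul, TensorProduct.tmul_zero, map_zero,
                    smul_zero, zero_add, add_zero]
                  rw [map_zsmul]
                  rw [ecast]
                  simp [pow_succ]
              refine Eq.trans ?_ hC0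
              rw [map_sub, map_sub, smul_sub, smul_sub]
              abel
            refine lift_helper (dL ((i+1)+(j+1))) _ ?_
            rintro z ⟨w, rfl⟩
            have hmem : _ ∈ LinearMap.ker (dL ((i+1)+j)) :=
              LinearMap.mem_ker.mpr (LinearMap.congr_fun hzero w)
            rw [hLexact ((i+1)+j)] at hmem
            exact hmem
      choose f hf using hex
      refine ⟨fun i j => if h : i + j ≤ n then H i j
        else if h2 : i + j = n + 1 then f i j h2 else 0, ?_⟩
      intro i j hij
      have hsame : ∀ i' j', i' + j' ≤ n →
          (fun i j => if h : i + j ≤ n then H i j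
            else if h2 : i + j = n + 1 then f i j h2 else 0) i' j' = H i' j' := by
        intro i' j' h'
        simp only [dif_pos h']
      have hCsame : auxC dE dK (fun i j => if h : i + j ≤ n then H i j
          else if h2 : i + j = n + 1 then f i j h2 else 0) i j = auxC dE dK H i j := by
        rcases i with _ | i' <;> rcases j with _ | j'
        · rfl
        · show (_ ∘ₗ _) = (_ ∘ₗ _)
          rw [hsame 0 j' (by omega)]
        · show (_ ∘ₗ _) = (_ ∘ₗ _)
          rw [hsame i' 0 (by omega)]
        · show (_ ∘ₗ (_ ∘ₗ _)) + _ = (_ ∘ₗ (_ ∘ₗ _)) + _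
          rw [hsame i' (j'+1) (by omega), hsame (i'+1) j' (by omega)]
      rw [hCsame]
      rcases Nat.lt_or_ge (i+j) (n+1) with hlt | hge
      · have h1 : i + j ≤ n := by omega
        have : (fun i j => if h : i + j ≤ n then H i j
            else if h2 : i + j = n + 1 then f i j h2 else 0) i j = H i j := by
          simp only [dif_pos h1]
        rw [this]
        exact hH i j h1
      · have h2 : i + j = n + 1 := by omega
        have : (fun i j => if h : i + j ≤ n then H i j
            else if h2 : i + j = n + 1 then f i j h2 else 0) i j = f i j h2 := by
          simp only [dif_neg (by omega : ¬ i + j ≤ n), dif_pos h2]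
        rw [this]
        exact hf i j h2

  -- the element ∂ᴱ_c(u⁻¹ 1) lies in I•E_c
  have hIc : ∀ z : E (c+1), dE c z ∈ I • (⊤ : Submodule S (E c)) := by
    intro z
    have hval : ∀ w : E 1, (a z) (dE 0 w) ∈ I := by
      intro w
      have h1 : e₀ (dE 0 w) ∈ I := by
        rw [← haug]; exact ⟨w, rfl⟩
      have h2 : e₀.symm (e₀ (dE 0 w)) = e₀ (dE 0 w) • e₀.symm 1 := by
        rw [← map_smul, smul_eq_mul, mul_one]
      have h3 : (a z) (dE 0 w) = e₀ (dE 0 w) * (a z) (e₀.symm 1) := by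
        conv_lhs => rw [← e₀.symm_apply_apply (dE 0 w)]
        rw [h2, map_smul, smul_eq_mul]
      rw [h3]
      exact Ideal.mul_mem_right _ _ h1
    have hfun : (b (dE c z)) ∈ I • (⊤ : Submodule S (Module.Dual S (E 1))) := by
      rw [hdual z]
      have hrepr : (dE 0).dualMap (a z)
          = ∑ k, ((a z) (dE 0 (Module.Free.chooseBasis S (E 1) k))) •
              (Module.Free.chooseBasis S (E 1)).coord k := by
        apply (Module.Free.chooseBasis S (E 1)).ext
        intro k
        simp [Module.Basis.coord_apply, Module.Basis.repr_self, Finsupp.single_apply]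
      rw [hrepr]
      exact Submodule.sum_mem _ (fun k _ =>
        Submodule.smul_mem_smul (hval _) Submodule.mem_top)
    have := smulTop_map I (b.symm.toLinearMap) hfun
    simpa using this
  constructor
  · intro x
    obtain ⟨x', rfl⟩ := Submodule.Quotient.mk_surjective _ x
    obtain ⟨H, hH⟩ := key (c+1)
    have hpt : dL ((c+1)+0) (H (c+1) 0 (u.symm 1 ⊗ₜ x'))
        = σN (c+1) 0 (u.symm 1 ⊗ₜ φhat 0 x')
          - φhat ((c+1)+0) (σM (c+1) 0 (u.symm 1 ⊗ₜ x'))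
          - auxC dE dK H (c+1) 0 (u.symm 1 ⊗ₜ x') := by
      have := LinearMap.congr_fun (hH (c+1) 0 (by omega)) (u.symm 1 ⊗ₜ x')
      simpa only [LinearMap.comp_apply, LinearMap.sub_apply, TensorProduct.map_tmul,
        LinearMap.id_coe, id_eq] using this
    have hCmem : auxC dE dK H (c+1) 0 (u.symm 1 ⊗ₜ[S] x')
        ∈ I • (⊤ : Submodule S (L ((c+1)+0))) := by
      have e : auxC dE dK H (c+1) 0 (u.symm 1 ⊗ₜ[S] x')
          = H c 0 (dE c (u.symm 1) ⊗ₜ x') := rfl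
      rw [e]
      have h1 : dE c (u.symm 1) ⊗ₜ[S] x' ∈ I • (⊤ : Submodule S (E c ⊗[S] K 0)) := by
        have := smulTop_map I ((TensorProduct.mk S (E c) (K 0)).flip x') (hIc (u.symm 1))
        simpa using this
      exact smulTop_map I (H c 0) h1
    refine ⟨Submodule.Quotient.mk (H (c+1) 0 (u.symm 1 ⊗ₜ x')), ?_⟩
    rw [quotMap_mk, quotMap_mk, quotMap_mk, quotMap_mk, quotMap_mk,
      hsigN 0 (φhat 0 x'), hsigM 0 x',
      ← Submodule.Quotient.mk_sub, Submodule.Quotient.eq]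
    have : dL ((c+1)+0) (H (c+1) 0 (u.symm 1 ⊗ₜ[S] x'))
        - (σN (c+1) 0 (u.symm 1 ⊗ₜ[S] φhat 0 x')
            - φhat ((c+1)+0) (σM (c+1) 0 (u.symm 1 ⊗ₜ[S] x')))
        = - auxC dE dK H (c+1) 0 (u.symm 1 ⊗ₜ[S] x') := by
      rw [hpt]; abel
    rw [this]
    exact Submodule.neg_mem _ hCmem
  · intro i x hx
    obtain ⟨x', rfl⟩ := Submodule.Quotient.mk_surjective _ x
    have hxmem : dK i x' ∈ I • (⊤ : Submodule S (K i)) := by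
      rw [quotMap_mk] at hx
      exact (Submodule.Quotient.mk_eq_zero _).mp hx
    obtain ⟨H, hH⟩ := key ((c+1)+(i+1))
    have hpt : dL ((c+1)+(i+1)) (H (c+1) (i+1) (u.symm 1 ⊗ₜ x'))
        = σN (c+1) (i+1) (u.symm 1 ⊗ₜ φhat (i+1) x')
          - φhat ((c+1)+(i+1)) (σM (c+1) (i+1) (u.symm 1 ⊗ₜ x'))
          - auxC dE dK H (c+1) (i+1) (u.symm 1 ⊗ₜ x') := by
      have := LinearMap.congr_fun (hH (c+1) (i+1) (by omega)) (u.symm 1 ⊗ₜ x')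
      simpa only [LinearMap.comp_apply, LinearMap.sub_apply, TensorProduct.map_tmul,
        LinearMap.id_coe, id_eq] using this
    have hCmem : auxC dE dK H (c+1) (i+1) (u.symm 1 ⊗ₜ[S] x')
        ∈ I • (⊤ : Submodule S (L ((c+1)+(i+1)))) := by
      have pc : (c + (i+1)) + 1 = ((c+1) + i) + 1 := by omega
      have e : auxC dE dK H (c+1) (i+1) (u.symm 1 ⊗ₜ[S] x')
          = castK (S := S) (K := L) pc (H c (i+1) (dE c (u.symm 1) ⊗ₜ x'))
            + ((-1 : ℤ)^(c+1)) • H (c+1) i (u.symm 1 ⊗ₜ dK i x') := rfl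
      rw [e]
      refine Submodule.add_mem _ ?_ ?_
      · have h1 : dE c (u.symm 1) ⊗ₜ[S] x'
            ∈ I • (⊤ : Submodule S (E c ⊗[S] K (i+1))) := by
          have := smulTop_map I ((TensorProduct.mk S (E c) (K (i+1))).flip x')
            (hIc (u.symm 1))
          simpa using this
        exact smulTop_map I (castK (S := S) (K := L) pc) (smulTop_map I (H c (i+1)) h1)
      · have h1 : u.symm 1 ⊗ₜ[S] dK i x'
            ∈ I • (⊤ : Submodule S (E (c+1) ⊗[S] K i)) := by
          have := smulTop_map I (TensorProduct.mk S (E (c+1)) (K i) (u.symm 1)) hxmem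
          simpa using this
        have h2 := smulTop_map I (H (c+1) i) h1
        exact (I • (⊤ : Submodule S (L ((c+1)+(i+1))))).toAddSubgroup.zsmul_mem h2 _
    refine ⟨Submodule.Quotient.mk (H (c+1) (i+1) (u.symm 1 ⊗ₜ x')), ?_⟩
    rw [quotMap_mk, quotMap_mk, quotMap_mk, quotMap_mk, quotMap_mk,
      hsigN (i+1) (φhat (i+1) x'), hsigM (i+1) x',
      ← Submodule.Quotient.mk_sub, Submodule.Quotient.eq]
    have : dL ((c+1)+(i+1)) (H (c+1) (i+1) (u.symm 1 ⊗ₜ[S] x'))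
        - (σN (c+1) (i+1) (u.symm 1 ⊗ₜ[S] φhat (i+1) x')
            - φhat ((c+1)+(i+1)) (σM (c+1) (i+1) (u.symm 1 ⊗ₜ[S] x')))
        = - auxC dE dK H (c+1) (i+1) (u.symm 1 ⊗ₜ[S] x') := by
      rw [hpt]; abel
    rw [this]
    exact Submodule.neg_mem _ hCmem
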